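/- Let ψ ∈ L²(X). If f ∈ S_Γ(ψ), then there exists a measurable function h on Ω such that Z_Γ[f](ω) = h(ω) Z_Γ[ψ](ω) for a.e. ω ∈ Ω. Conversely, if f ∈ L²(X) satisfies Z_Γ[f](ω) = h(ω) Z_Γ[ψ](ω) a.e. for some measurable h on Ω, then f ∈ S_Γ(ψ). -/

import Mathlib

open MeasureTheory ENNReal

local notation "⟪" x ", " y "⟫" => @inner ℂ _ _ x y

set_option maxHeartbeats 1000000 in
theorem principal_space_characterization {Γ X Γhat : Type*} [AddCommGroup Γ] [Countable Γ]
    [MeasurableSpace X] (μ : Measure X) [SigmaFinite μ]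
    [AddCommGroup Γhat] [MeasurableSpace Γhat] (ν : Measure Γhat) [IsProbabilityMeasure ν]
    (p : Γ → Γhat → ℂ)
    (hp1 : ∀ γ γ' ω, p (γ + γ') ω = p γ ω * p γ' ω)
    (hpmeas : ∀ γ, Measurable (p γ))
    (hpnorm : ∀ γ ω, ‖p γ ω‖ = 1)
    (htotal : ∀ F : Γhat → ℂ, Integrable F ν →
      (∀ γ : Γ, ∫ ω, F ω * p γ ω ∂ν = 0) → F =ᵐ[ν] 0)
    (Pi : Γ → (Lp ℂ 2 μ ≃ₗᵢ[ℂ] Lp ℂ 2 μ))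
    (hPi : ∀ γ γ' f, Pi γ (Pi γ' f) = Pi (γ + γ') f)
    (CΓ : Set X)
    (Z : Lp ℂ 2 μ ≃ₗᵢ[ℂ] Lp (Lp ℂ 2 (μ.restrict CΓ)) 2 ν)
    (hZ : ∀ (γ : Γ) (f : Lp ℂ 2 μ), ∀ᵐ ω ∂ν,
      (Z (Pi γ f) : Γhat → Lp ℂ 2 (μ.restrict CΓ)) ω
        = p γ ω • (Z f : Γhat → Lp ℂ 2 (μ.restrict CΓ)) ω)
    (ψ : Lp ℂ 2 μ)
    (S : Submodule ℂ (Lp ℂ 2 μ))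
    (hS : S = (Submodule.span ℂ {g | ∃ γ : Γ, g = Pi γ ψ}).topologicalClosure) :
    ∀ f : Lp ℂ 2 μ, f ∈ S ↔
      ∃ h : Γhat → ℂ, Measurable h ∧ ∀ᵐ ω ∂ν,
        (Z f : Γhat → Lp ℂ 2 (μ.restrict CΓ)) ω
          = h ω • (Z ψ : Γhat → Lp ℂ 2 (μ.restrict CΓ)) ω := by
  classical
  subst hS
  set K := Lp ℂ 2 (μ.restrict CΓ) with hK
  set M : Set (Lp ℂ 2 μ) := {g | ∃ γ : Γ, g = Pi γ ψ} with hM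
  -- p 0 = 1
  have hp0 : ∀ ω, p 0 ω = 1 := by
    intro ω
    have hne : p 0 ω ≠ 0 := fun h0 => by simpa [h0] using hpnorm 0 ω
    have h := hp1 0 0 ω
    rw [add_zero] at h
    have : p 0 ω * 1 = p 0 ω * p 0 ω := by rw [mul_one]; exact h
    exact (mul_left_cancel₀ hne this).symm
  -- conjugation
  have hconj : ∀ γ ω, (starRingEnd ℂ) (p γ ω) = p (-γ) ω := by
    intro γ ω
    have hmul : p γ ω * p (-γ) ω = 1 := by
      rw [← hp1, add_neg_cancel, hp0]
    have hcm : (starRingEnd ℂ) (p γ ω) * p γ ω = 1 := by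
      rw [Complex.conj_mul']
      norm_cast
      rw [hpnorm]; norm_num
    calc (starRingEnd ℂ) (p γ ω)
        = (starRingEnd ℂ) (p γ ω) * (p γ ω * p (-γ) ω) := by rw [hmul, mul_one]
      _ = ((starRingEnd ℂ) (p γ ω) * p γ ω) * p (-γ) ω := by ring
      _ = p (-γ) ω := by rw [hcm, one_mul]
  -- inner products through Z
  have hinner : ∀ a b : Lp ℂ 2 μ,
      ⟪a, b⟫ = ∫ ω, ⟪(Z a : Γhat → K) ω, (Z b : Γhat → K) ω⟫ ∂ν := by
    intro a b
    rw [← Z.inner_map_map a b, MeasureTheory.L2.inner_def]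
  -- key: if t ⟂ all generators, then ⟪Zψ ω, Zt ω⟫ = 0 a.e.
  have key : ∀ t : Lp ℂ 2 μ, (∀ γ : Γ, ⟪Pi γ ψ, t⟫ = 0) →
      (fun ω => ⟪(Z ψ : Γhat → K) ω, (Z t : Γhat → K) ω⟫) =ᵐ[ν] 0 := by
    intro t ht
    apply htotal
    · exact MeasureTheory.L2.integrable_inner (𝕜 := ℂ) (Z ψ) (Z t)
    · intro γ
      have h1 : ⟪Pi (-γ) ψ, t⟫ = 0 := ht (-γ)
      rw [hinner] at h1
      rw [← h1]
      apply integral_congr_ae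
      filter_upwards [hZ (-γ) ψ] with ω hω
      rw [hω, inner_smul_left, hconj, neg_neg, mul_comm]
  intro f
  constructor
  · -- forward direction
    intro hf
    -- measurable representatives
    obtain ⟨Ψ, hΨsm, hΨae⟩ : ∃ Ψ : Γhat → K, StronglyMeasurable Ψ ∧
        (Z ψ : Γhat → K) =ᵐ[ν] Ψ :=
      ⟨(Lp.aestronglyMeasurable (Z ψ)).mk _,
        (Lp.aestronglyMeasurable (Z ψ)).stronglyMeasurable_mk,
        (Lp.aestronglyMeasurable (Z ψ)).ae_eq_mk⟩
    obtain ⟨F, hFsm, hFae⟩ : ∃ F : Γhat → K, StronglyMeasurable F ∧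
        (Z f : Γhat → K) =ᵐ[ν] F :=
      ⟨(Lp.aestronglyMeasurable (Z f)).mk _,
        (Lp.aestronglyMeasurable (Z f)).stronglyMeasurable_mk,
        (Lp.aestronglyMeasurable (Z f)).ae_eq_mk⟩
    set h : Γhat → ℂ := fun ω =>
      if ‖Ψ ω‖ = 0 then 0 else ⟪Ψ ω, F ω⟫ / ((‖Ψ ω‖ : ℂ)) ^ 2 with hh
    have hmeas : Measurable h := by
      apply Measurable.ite
      · exact (hΨsm.norm.measurable) (measurableSet_singleton 0)
      · exact measurable_const
      · exact (hΨsm.inner hFsm).measurable.div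
          ((Complex.measurable_ofReal.comp hΨsm.norm.measurable).pow measurable_const)
    set r : Γhat → K := fun ω => F ω - h ω • Ψ ω with hr
    have hrsm : StronglyMeasurable r :=
      hFsm.sub ((hmeas.stronglyMeasurable).smul hΨsm)
    -- pointwise orthogonality  ⟪Ψ ω, r ω⟫ = 0
    have hortho : ∀ ω, ⟪Ψ ω, r ω⟫ = 0 := by
      intro ω
      by_cases h0 : ‖Ψ ω‖ = 0
      · have : Ψ ω = 0 := norm_eq_zero.mp h0
        simp [hr, this]
        exact inner_zero_left _
      · have hΨΨ : ⟪Ψ ω, Ψ ω⟫ = ((‖Ψ ω‖ : ℂ)) ^ 2 := inner_self_eq_norm_sq_to_K (Ψ ω)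
        have hne : ((‖Ψ ω‖ : ℂ)) ^ 2 ≠ 0 := by
          simpa using pow_ne_zero 2 (Complex.ofReal_ne_zero.mpr h0)
        simp only [hr, inner_sub_right, inner_smul_right, hh, if_neg h0, hΨΨ]
        rw [inner_sub_right, inner_smul_right, hΨΨ]
        field_simp
        rw [div_self (Complex.ofReal_ne_zero.mpr h0), sub_self, mul_zero]
    -- norm bound: ‖r ω‖ ≤ 2 * ‖F ω‖
    have hbound : ∀ ω, ‖r ω‖ ≤ 2 * ‖F ω‖ := by
      intro ω
      have h1 : ‖h ω • Ψ ω‖ ≤ ‖F ω‖ := by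
        by_cases h0 : ‖Ψ ω‖ = 0
        · have hz : Ψ ω = 0 := norm_eq_zero.mp h0
          simp [hz]
        · rw [norm_smul, hh]
          simp only [if_neg h0]
          rw [norm_div]
          have h2 : ‖((‖Ψ ω‖ : ℂ)) ^ 2‖ = ‖Ψ ω‖ ^ 2 := by
            rw [norm_pow, Complex.norm_real, Real.norm_eq_abs, abs_of_nonneg (norm_nonneg _)]
          rw [h2]
          have h3 : ‖⟪Ψ ω, F ω⟫‖ ≤ ‖Ψ ω‖ * ‖F ω‖ := norm_inner_le_norm _ _
          have hpos : 0 < ‖Ψ ω‖ := lt_of_le_of_ne (norm_nonneg _) (Ne.symm h0)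
          rw [div_mul_eq_mul_div, div_le_iff₀ (by positivity)]
          calc ‖⟪Ψ ω, F ω⟫‖ * ‖Ψ ω‖ ≤ (‖Ψ ω‖ * ‖F ω‖) * ‖Ψ ω‖ :=
                mul_le_mul_of_nonneg_right h3 (norm_nonneg _)
            _ = ‖F ω‖ * ‖Ψ ω‖ ^ 2 := by ring
      calc ‖r ω‖ ≤ ‖F ω‖ + ‖h ω • Ψ ω‖ := norm_sub_le _ _
        _ ≤ ‖F ω‖ + ‖F ω‖ := by linarith
        _ = 2 * ‖F ω‖ := by ring
    -- r is in L²
    have hFmem : MemLp F 2 ν := (Lp.memLp (Z f)).ae_eq hFae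
    have hrmem : MemLp r 2 ν := by
      apply MemLp.of_le (hFmem.norm.const_mul 2) hrsm.aestronglyMeasurable
      filter_upwards with ω
      calc ‖r ω‖ ≤ 2 * ‖F ω‖ := hbound ω
        _ ≤ ‖2 * ‖F ω‖‖ := le_abs_self _
    set g : Lp ℂ 2 μ := Z.symm (hrmem.toLp r) with hg
    have hZg : (Z g : Γhat → K) =ᵐ[ν] r := by
      rw [hg, Z.apply_symm_apply]
      exact hrmem.coeFn_toLp
    -- g is orthogonal to the generators
    have hgen : ∀ γ : Γ, ⟪Pi γ ψ, g⟫ = 0 := by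
      intro γ
      rw [hinner]
      rw [show (0 : ℂ) = ∫ _ : Γhat, (0:ℂ) ∂ν by simp]
      apply integral_congr_ae
      filter_upwards [hZ γ ψ, hZg, hΨae] with ω h1 h2 h3
      rw [h1, h2, inner_smul_left, h3, hortho ω, mul_zero]
    -- g ⟂ everything in S
    have hspan : ∀ u ∈ Submodule.span ℂ M, ⟪u, g⟫ = 0 := by
      intro u hu
      induction hu using Submodule.span_induction with
      | mem x hx => obtain ⟨γ, rfl⟩ := hx; exact hgen γ
      | zero => simp
      | add x y _ _ hx hy => rw [inner_add_left, hx, hy, add_zero]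
      | smul c x _ hx => rw [inner_smul_left, hx, mul_zero]
    have hfg : ⟪g, f⟫ = 0 := by
      have hle : (Submodule.span ℂ M).topologicalClosure ≤ ((Submodule.span ℂ M)ᗮ)ᗮ :=
        Submodule.topologicalClosure_minimal _
          (Submodule.le_orthogonal_orthogonal _) (Submodule.isClosed_orthogonal _)
      have hgo : g ∈ (Submodule.span ℂ M)ᗮ :=
        (Submodule.mem_orthogonal _ _).mpr hspan
      exact (Submodule.mem_orthogonal _ _).mp (hle hf) g hgo
    -- ⟪g, f⟫ = ⟪g, g⟫
    have hgf : ⟪g, g⟫ = (0 : ℂ) := by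
      rw [← hfg, hinner, hinner]
      apply integral_congr_ae
      filter_upwards [hZg, hFae] with ω h2 h3
      rw [h2, h3]
      have hF : F ω = r ω + h ω • Ψ ω := by simp [hr]
      have hrΨ : ⟪r ω, Ψ ω⟫ = 0 := by
        rw [← inner_conj_symm, hortho ω, map_zero]
      rw [hF, inner_add_right, inner_smul_right, hrΨ, mul_zero, add_zero]
    have hg0 : g = 0 := inner_self_eq_zero.mp hgf
    have hr0 : (fun ω => r ω) =ᵐ[ν] 0 := by
      have : (Z g : Γhat → K) =ᵐ[ν] 0 := by
        rw [hg0, map_zero]; exact Lp.coeFn_zero _ _ _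
      exact (hZg.symm.trans this :)
    refine ⟨h, hmeas, ?_⟩
    filter_upwards [hFae, hΨae, hr0] with ω h1 h2 h3
    have : F ω - h ω • Ψ ω = 0 := h3
    rw [h1, h2, ← sub_eq_zero]
    exact this
  · -- reverse direction
    rintro ⟨h, hmeas, hae⟩
    set Sc := (Submodule.span ℂ M).topologicalClosure with hSc
    haveI : CompleteSpace Sc :=
      (Submodule.isClosed_topologicalClosure _).completeSpace_coe
    obtain ⟨s, hs, t, htmem, hft⟩ := Sc.exists_add_mem_mem_orthogonal f
    have htgen : ∀ γ : Γ, ⟪Pi γ ψ, t⟫ = 0 := by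
      intro γ
      have hmem : Pi γ ψ ∈ Sc :=
        Submodule.le_topologicalClosure _ (Submodule.subset_span ⟨γ, rfl⟩)
      exact (Submodule.mem_orthogonal _ _).mp htmem _ hmem
    have hkey := key t htgen
    have htf : ⟪t, f⟫ = 0 := by
      rw [hinner]
      rw [show (0 : ℂ) = ∫ _ : Γhat, (0:ℂ) ∂ν by simp]
      apply integral_congr_ae
      filter_upwards [hae, hkey] with ω h1 h2
      have h2' : ⟪(Z ψ : Γhat → K) ω, (Z t : Γhat → K) ω⟫ = 0 := h2
      have h2'' : ⟪(Z t : Γhat → K) ω, (Z ψ : Γhat → K) ω⟫ = 0 := by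
        rw [← inner_conj_symm, h2', map_zero]
      rw [h1, inner_smul_right, h2'', mul_zero]
    have hts : ⟪t, s⟫ = 0 :=
      (Submodule.mem_orthogonal' _ _).mp htmem s hs
    have htt : ⟪t, t⟫ = (0 : ℂ) := by
      have : ⟪t, f⟫ = ⟪t, s⟫ + ⟪t, t⟫ := by rw [hft, inner_add_right]
      rw [htf, hts, zero_add] at this
      exact this.symm
    have ht0 : t = 0 := inner_self_eq_zero.mp htt
    rw [hft, ht0, add_zero]
    exact hs
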